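/- (Theorem 2: invariance of the circumvent-modified funnel and obstacle avoidance.) Consider the system ẋ = f(x) + g(x)u with f, g locally Lipschitz and g(x)g(x)ᵀ positive definite. Let (ρ_L, ρ_U) be a reachability funnel, let i* be a fixed coordinate, let β : [0,∞) → ℝ be a circumvent function (continuously differentiable with bounded derivative, bounded), and let α : [0,∞) → ℝⁿ be continuously differentiable, nonnegative, bounded, with bounded derivative. Define the modified funnel by γ_{i*,L}(t) = (1/ν)·ln(exp(ν·ρ_{i*,L}(t)) + exp(ν·β(t))) for a fixed ν > 0, γ_{i*,U}(t) = ρ_{i*,U}(t) + α_{i*}(t), and γ_{i,L} = ρ_{i,L}, γ_{i,U} = ρ_{i,U} for i ≠ i*, and assume inf over t ≥ 0 and i of (γ_{i,U}(t) − γ_{i,L}(t)) is positive. Then, with the funnel controller û (gain k > 0) built from (γ_L, γ_U), every admissible closed-loop solution x : [0,∞) → ℝⁿ satisfies γ_{i,L}(t) < x_i(t) < γ_{i,U}(t) for all t ≥ 0 and all i; in particular, x_{i*}(t) > β(t) for all t ≥ 0, so the trajectory stays strictly above the circumvent function at all times. -/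

import Mathlib

open Matrix Set

/-- Normalized error `ê = (2z − (U + L))/(U − L)`. -/
noncomputable def nerr (L U z : ℝ) : ℝ := (2 * z - (U + L)) / (U - L)

/-- Transformed error `ε̂ = ln((1 + ê)/(1 − ê))`. -/
noncomputable def terr (L U z : ℝ) : ℝ := Real.log ((1 + nerr L U z) / (1 - nerr L U z))

/-- Diagonal gain entry `ξ̂ = 4/((U − L)(1 − ê²))`. -/
noncomputable def xhat (L U z : ℝ) : ℝ := 4 / ((U - L) * (1 - (nerr L U z) ^ 2))

/-- The funnel controller
`û(y,t) = −g(y)ᵀ(g(y)g(y)ᵀ)⁻¹ (k ξ̂(y,t) ε̂(y,t) − ½ γ̇_d(t) ê(y,t))`. -/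
noncomputable def funnelController {n m : ℕ} (k : ℝ)
    (g : (Fin n → ℝ) → Matrix (Fin n) (Fin m) ℝ)
    (γL γU γL' γU' : ℝ → Fin n → ℝ) (y : Fin n → ℝ) (t : ℝ) : Fin m → ℝ :=
  -((g y)ᵀ.mulVec (((g y * (g y)ᵀ)⁻¹).mulVec (fun i =>
      k * xhat (γL t i) (γU t i) (y i) * terr (γL t i) (γU t i) (y i)
        - (1 / 2) * (γU' t i - γL' t i) * nerr (γL t i) (γU t i) (y i))))

/-- Reachability funnel function `ρᵢ(t) = (1 − ρ_{i,∞})·e^{−lᵢt} + ρ_{i,∞}`. -/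
noncomputable def rhoFun (ρinf l t : ℝ) : ℝ := (1 - ρinf) * Real.exp (-l * t) + ρinf

/-- Lower reachability funnel boundary `ρ_{i,L}(t) = ηᵢ − c̲ᵢ ρᵢ(t)` with `c̲ᵢ = ηᵢ − X̲ᵢ`. -/
noncomputable def rhoL {n : ℕ} (η Xlow l ρinf : Fin n → ℝ) : ℝ → Fin n → ℝ :=
  fun t i => η i - (η i - Xlow i) * rhoFun (ρinf i) (l i) t

/-- Upper reachability funnel boundary `ρ_{i,U}(t) = ηᵢ + c̄ᵢ ρᵢ(t)` with `c̄ᵢ = X̄ᵢ − ηᵢ`. -/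
noncomputable def rhoU {n : ℕ} (η Xhigh l ρinf : Fin n → ℝ) : ℝ → Fin n → ℝ :=
  fun t i => η i + (Xhigh i - η i) * rhoFun (ρinf i) (l i) t



lemma one_add_nerr (L U z : ℝ) (h0 : L < U) :
    1 + nerr L U z = 2 * (z - L) / (U - L) := by
  have h : U - L ≠ 0 := by linarith
  unfold nerr; field_simp; ring

lemma one_sub_nerr (L U z : ℝ) (h0 : L < U) :
    1 - nerr L U z = 2 * (U - z) / (U - L) := by
  have h : U - L ≠ 0 := by linarith
  unfold nerr; field_simp; ring

lemma one_add_nerr_pos {L U z : ℝ} (h1 : L < z) (h2 : z < U) : 0 < 1 + nerr L U z := by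
  rw [one_add_nerr L U z (h1.trans h2)]
  have h3 : 0 < U - L := by linarith
  have h4 : 0 < z - L := by linarith
  positivity

lemma one_sub_nerr_pos {L U z : ℝ} (h1 : L < z) (h2 : z < U) : 0 < 1 - nerr L U z := by
  rw [one_sub_nerr L U z (h1.trans h2)]
  have h3 : 0 < U - L := by linarith
  have h4 : 0 < U - z := by linarith
  positivity

lemma one_sub_nerr_sq_pos {L U z : ℝ} (h1 : L < z) (h2 : z < U) :
    0 < 1 - (nerr L U z) ^ 2 := by
  have a := one_add_nerr_pos h1 h2
  have b := one_sub_nerr_pos h1 h2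
  nlinarith

lemma xhat_pos {L U z : ℝ} (h1 : L < z) (h2 : z < U) : 0 < xhat L U z := by
  unfold xhat
  have h3 := one_sub_nerr_sq_pos h1 h2
  have h4 : (0:ℝ) < U - L := by linarith
  positivity

lemma xhat_lower {L U z Γ : ℝ} (h1 : L < z) (h2 : z < U) (hΓ : U - L ≤ Γ) :
    4 / Γ ≤ xhat L U z := by
  have hsq := one_sub_nerr_sq_pos h1 h2
  have hd : (0:ℝ) < U - L := by linarith
  have hΓ0 : 0 < Γ := lt_of_lt_of_le hd hΓ
  unfold xhat
  have hle : (U - L) * (1 - (nerr L U z) ^ 2) ≤ Γ := by nlinarith [sq_nonneg (nerr L U z)]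
  have hpos : 0 < (U - L) * (1 - (nerr L U z) ^ 2) := by positivity
  exact div_le_div_of_nonneg_left (by norm_num) hpos hle

/-- one-sided: max on the left implies derivative nonneg -/
lemma left_max_deriv_nonneg {F : ℝ → ℝ} {a t F' : ℝ} (hat : a < t)
    (hmax : ∀ s ∈ Icc a t, F s ≤ F t) (hd : HasDerivAt F F' t) : 0 ≤ F' := by
  have h := (hd.hasDerivWithinAt (s := Iio t))
  rw [hasDerivWithinAt_iff_tendsto_slope] at h
  have heq : Iio t \ {t} = Iio t := by
    ext s; simp only [mem_diff, mem_Iio, mem_singleton_iff]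
    exact ⟨fun h => h.1, fun h => ⟨h, ne_of_lt h⟩⟩
  rw [heq] at h
  have hne : (nhdsWithin t (Iio t)).NeBot := nhdsLT_neBot t
  refine ge_of_tendsto h ?_
  have hIci : Ici a ∈ nhdsWithin t (Iio t) :=
    nhdsWithin_le_nhds (Ici_mem_nhds hat)
  filter_upwards [hIci, self_mem_nhdsWithin] with s hs hs'
  have h1 : F s - F t ≤ 0 := sub_nonpos.2 (hmax s ⟨hs, le_of_lt hs'⟩)
  have h2 : s - t < 0 := sub_neg.2 hs'
  rw [slope_def_field]
  exact div_nonneg_iff.2 (Or.inr ⟨h1, le_of_lt h2⟩)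

/-- barrier lemma: if `G` starts below `c` and has negative derivative whenever
it touches `c` from below, it stays below `c`. -/
lemma barrier_lemma {G G' : ℝ → ℝ} {a b c : ℝ} (hab : a ≤ b)
    (hd : ∀ t ∈ Icc a b, HasDerivAt G (G' t) t)
    (h0 : G a < c)
    (hbar : ∀ t ∈ Ioc a b, c ≤ G t → G' t < 0) :
    ∀ t ∈ Icc a b, G t < c := by
  by_contra hcon
  push_neg at hcon
  obtain ⟨t₀, ht₀, hct₀⟩ := hcon
  have hGc : ContinuousOn G (Icc a b) := fun t ht => ((hd t ht).continuousAt).continuousWithinAt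
  set B : Set ℝ := Icc a b ∩ G ⁻¹' (Ici c) with hB
  have hBclosed : IsClosed B := hGc.preimage_isClosed_of_isClosed isClosed_Icc isClosed_Ici
  have hBne : B.Nonempty := ⟨t₀, ht₀, hct₀⟩
  have hBbdd : BddBelow B := ⟨a, fun s hs => hs.1.1⟩
  set t₁ := sInf B with ht₁
  have ht₁B : t₁ ∈ B := hBclosed.csInf_mem hBne hBbdd
  have ht₁Icc : t₁ ∈ Icc a b := ht₁B.1
  have ht₁c : c ≤ G t₁ := ht₁B.2
  have ht₁a : a < t₁ := by
    rcases lt_or_eq_of_le ht₁Icc.1 with h | h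
    · exact h
    · exact absurd ht₁c (by rw [← h]; exact not_le.2 h0)
  have hmax : ∀ s ∈ Icc a t₁, G s ≤ G t₁ := by
    intro s hs
    rcases lt_or_eq_of_le hs.2 with h | h
    · by_contra hGs
      push_neg at hGs
      have : s ∈ B := ⟨⟨hs.1, le_trans (le_of_lt h) ht₁Icc.2⟩, le_trans ht₁c (le_of_lt hGs)⟩
      exact absurd (csInf_le hBbdd this) (not_le.2 h)
    · rw [h]
  have hd1 : HasDerivAt G (G' t₁) t₁ := hd t₁ ht₁Icc
  have := left_max_deriv_nonneg ht₁a hmax hd1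
  exact absurd (hbar t₁ ⟨ht₁a, ht₁Icc.2⟩ ht₁c) (not_lt.2 this)

/-- chain rule for the transformed error along moving boundaries -/
lemma hasDerivAt_terr_comp {ℓ u ζ : ℝ → ℝ} {t ℓd ud ζd : ℝ}
    (hℓ : HasDerivAt ℓ ℓd t) (hu : HasDerivAt u ud t) (hζ : HasDerivAt ζ ζd t)
    (h1 : ℓ t < ζ t) (h2 : ζ t < u t) :
    HasDerivAt (fun s => terr (ℓ s) (u s) (ζ s))
      ((xhat (ℓ t) (u t) (ζ t) / 2) *
        (2 * ζd - (ud + ℓd) - nerr (ℓ t) (u t) (ζ t) * (ud - ℓd))) t := by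
  have hd0 : (0:ℝ) < u t - ℓ t := by linarith
  have hdne : u t - ℓ t ≠ 0 := ne_of_gt hd0
  -- derivative of the normalized error
  have hnum : HasDerivAt (fun s => 2 * ζ s - (u s + ℓ s)) (2 * ζd - (ud + ℓd)) t :=
    (hζ.const_mul 2).sub (hu.add hℓ)
  have hden : HasDerivAt (fun s => u s - ℓ s) (ud - ℓd) t := hu.sub hℓ
  have he : HasDerivAt (fun s => nerr (ℓ s) (u s) (ζ s))
      (((2 * ζd - (ud + ℓd)) * (u t - ℓ t) - (2 * ζ t - (u t + ℓ t)) * (ud - ℓd)) /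
        (u t - ℓ t) ^ 2) t := by
    simp only [nerr]
    exact hnum.div hden hdne
  set e := nerr (ℓ t) (u t) (ζ t) with hedef
  set ed := ((2 * ζd - (ud + ℓd)) * (u t - ℓ t) - (2 * ζ t - (u t + ℓ t)) * (ud - ℓd)) /
        (u t - ℓ t) ^ 2 with heddef
  have hap := one_add_nerr_pos h1 h2
  have hsp := one_sub_nerr_pos h1 h2
  have hspne : 1 - e ≠ 0 := ne_of_gt hsp
  -- derivative of the quotient (1+e)/(1-e)
  have hq : HasDerivAt (fun s => (1 + nerr (ℓ s) (u s) (ζ s)) / (1 - nerr (ℓ s) (u s) (ζ s)))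
      ((ed * (1 - e) - (1 + e) * (-ed)) / (1 - e) ^ 2) t := by
    have := ((hasDerivAt_const t (1:ℝ)).add he).div ((hasDerivAt_const t (1:ℝ)).sub he) hspne
    refine this.congr_deriv ?_
    simp only [Pi.add_apply, Pi.sub_apply, ← hedef]
    ring
  have hqpos : 0 < (1 + e) / (1 - e) := div_pos hap hsp
  have hlog := hq.log (ne_of_gt hqpos)
  have : HasDerivAt (fun s => terr (ℓ s) (u s) (ζ s))
      (((ed * (1 - e) - (1 + e) * (-ed)) / (1 - e) ^ 2) / ((1 + e) / (1 - e))) t := by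
    simp only [terr]
    convert hlog using 2
  convert this using 1
  have hesq := one_sub_nerr_sq_pos h1 h2
  rw [heddef]
  unfold xhat
  rw [← hedef]
  have hee : 2 * ζ t - (u t + ℓ t) = e * (u t - ℓ t) := by
    rw [hedef]; unfold nerr; field_simp
  rw [hee]
  have hne1 : 1 + e ≠ 0 := ne_of_gt hap
  have hne2 : 1 - e ^ 2 ≠ 0 := ne_of_gt hesq
  field_simp
  ring


lemma control_identity {n m : ℕ} (k : ℝ)
    (g : (Fin n → ℝ) → Matrix (Fin n) (Fin m) ℝ)
    (γL γU γL' γU' : ℝ → Fin n → ℝ) (y : Fin n → ℝ) (t : ℝ)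
    (hpd : (g y * (g y)ᵀ).PosDef) :
    (g y).mulVec (funnelController k g γL γU γL' γU' y t) = fun i =>
      -(k * xhat (γL t i) (γU t i) (y i) * terr (γL t i) (γU t i) (y i)
        - (1 / 2) * (γU' t i - γL' t i) * nerr (γL t i) (γU t i) (y i)) := by
  unfold funnelController
  rw [Matrix.mulVec_neg, Matrix.mulVec_mulVec, Matrix.mulVec_mulVec]
  rw [Matrix.mul_nonsing_inv _ (isUnit_iff_ne_zero.2 (ne_of_gt hpd.det_pos))]
  rw [Matrix.one_mulVec]
  ext i
  simp


lemma hasDerivAt_rhoFun (ρ l t : ℝ) :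
    HasDerivAt (rhoFun ρ l) ((1 - ρ) * (Real.exp (-l * t) * -l)) t := by
  have h1 : HasDerivAt (fun s : ℝ => -l * s) (-l) t := by
    simpa using (hasDerivAt_id t).const_mul (-l)
  have h2 := (h1.exp.const_mul (1 - ρ)).add_const ρ
  exact h2

lemma hasDerivAt_rhoL {n : ℕ} (η Xlow l ρinf : Fin n → ℝ) (i : Fin n) (t : ℝ) :
    HasDerivAt (fun s => rhoL η Xlow l ρinf s i)
      (-((η i - Xlow i) * ((1 - ρinf i) * (Real.exp (-l i * t) * -l i)))) t := by
  unfold rhoL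
  exact ((hasDerivAt_rhoFun (ρinf i) (l i) t).const_mul (η i - Xlow i)).const_sub (η i)

lemma hasDerivAt_rhoU {n : ℕ} (η Xhigh l ρinf : Fin n → ℝ) (i : Fin n) (t : ℝ) :
    HasDerivAt (fun s => rhoU η Xhigh l ρinf s i)
      ((Xhigh i - η i) * ((1 - ρinf i) * (Real.exp (-l i * t) * -l i))) t := by
  unfold rhoU
  exact (hasDerivAt_const t (η i)).add ((hasDerivAt_rhoFun (ρinf i) (l i) t).const_mul (Xhigh i - η i)) |>.congr_deriv (by ring)

lemma continuous_rhoLcoord {n : ℕ} (η Xlow l ρinf : Fin n → ℝ) (i : Fin n) :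
    Continuous (fun t => rhoL η Xlow l ρinf t i) := by
  unfold rhoL rhoFun; fun_prop

set_option maxHeartbeats 1000000 in
/-- Theorem 2 (invariance of the circumvent-modified funnel and obstacle avoidance):
with the funnel controller built from the modified funnel, every admissible closed-loop
solution stays strictly inside the modified funnel for all time; in particular
`x_{i*}(t) > β(t)` for all `t ≥ 0`. -/
theorem circumvent_funnel_invariance {n m : ℕ}
    (f : (Fin n → ℝ) → (Fin n → ℝ))
    (g : (Fin n → ℝ) → Matrix (Fin n) (Fin m) ℝ)
    (hf : LocallyLipschitz f)
    (hg : LocallyLipschitz (fun y => fun i j => g y i j))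
    (hpd : ∀ y, (g y * (g y)ᵀ).PosDef)
    (Xlow Xhigh η l ρinf : Fin n → ℝ)
    (hX : ∀ i, Xlow i < η i ∧ η i < Xhigh i)
    (hl : ∀ i, 0 < l i)
    (hρinf : ∀ i, ρinf i ∈ Ioo (0 : ℝ) 1)
    (istar : Fin n) (ν : ℝ) (hν : 0 < ν)
    -- circumvent function: continuously differentiable, bounded, with bounded derivative
    (β β' : ℝ → ℝ)
    (hβ : ∀ t ∈ Ici (0 : ℝ), HasDerivAt β (β' t) t)
    (hβ'c : ContinuousOn β' (Ici 0))
    (hβbdd : ∃ C : ℝ, ∀ t ∈ Ici (0 : ℝ), |β t| ≤ C ∧ |β' t| ≤ C)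
    -- update function: continuously differentiable, nonnegative, bounded,
    -- with bounded derivative
    (α α' : ℝ → Fin n → ℝ)
    (hα : ∀ t ∈ Ici (0 : ℝ), HasDerivAt α (α' t) t)
    (hα'c : ContinuousOn α' (Ici 0))
    (hαnonneg : ∀ t ∈ Ici (0 : ℝ), ∀ i, 0 ≤ α t i)
    (hαbdd : ∃ C : ℝ, ∀ t ∈ Ici (0 : ℝ), ‖α t‖ ≤ C ∧ ‖α' t‖ ≤ C)
    -- the modified funnel and its derivative
    (γL γU γL' γU' : ℝ → Fin n → ℝ)
    (hγLdef : ∀ t : ℝ, ∀ i,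
      γL t i = if i = istar then
          (1 / ν) * Real.log (Real.exp (ν * rhoL η Xlow l ρinf t i) + Real.exp (ν * β t))
        else rhoL η Xlow l ρinf t i)
    (hγUdef : ∀ t : ℝ, ∀ i,
      γU t i = if i = istar then rhoU η Xhigh l ρinf t i + α t i
        else rhoU η Xhigh l ρinf t i)
    (hγL : ∀ t ∈ Ici (0 : ℝ), HasDerivAt γL (γL' t) t)
    (hγU : ∀ t ∈ Ici (0 : ℝ), HasDerivAt γU (γU' t) t)
    (hgap : ∃ δ > (0 : ℝ), ∀ t ∈ Ici (0 : ℝ), ∀ i, δ ≤ γU t i - γL t i)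
    (k : ℝ) (hk : 0 < k)
    -- admissible closed-loop solution
    (x : ℝ → Fin n → ℝ)
    (hxc : ContinuousOn x (Ici 0))
    (hx0 : ∀ i, γL 0 i < x 0 i ∧ x 0 i < γU 0 i)
    (hode : ∀ t ∈ Ici (0 : ℝ),
      (∀ s ∈ Icc (0 : ℝ) t, ∀ i, γL s i < x s i ∧ x s i < γU s i) →
      HasDerivAt x
        (f (x t) + (g (x t)).mulVec (funnelController k g γL γU γL' γU' (x t) t)) t) :
    (∀ t ∈ Ici (0 : ℝ), ∀ i, γL t i < x t i ∧ x t i < γU t i) ∧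
      (∀ t ∈ Ici (0 : ℝ), β t < x t istar) := by
  classical
  obtain ⟨δ, hδ, hgapδ⟩ := hgap
  -- continuity of the funnel boundaries
  have hγLc : ContinuousOn γL (Ici 0) :=
    fun t ht => (hγL t ht).continuousAt.continuousWithinAt
  have hγUc : ContinuousOn γU (Ici 0) :=
    fun t ht => (hγU t ht).continuousAt.continuousWithinAt
  have hγLci : ∀ i, ContinuousOn (fun t => γL t i) (Ici 0) := fun i => continuousOn_pi.1 hγLc i
  have hγUci : ∀ i, ContinuousOn (fun t => γU t i) (Ici 0) := fun i => continuousOn_pi.1 hγUc i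
  have hxci : ∀ i, ContinuousOn (fun t => x t i) (Ici 0) := fun i => continuousOn_pi.1 hxc i
  have hβc : ContinuousOn β (Ici 0) :=
    fun t ht => (hβ t ht).continuousAt.continuousWithinAt
  have hγLd : ∀ i, ∀ t ∈ Ici (0:ℝ), HasDerivAt (fun s => γL s i) (γL' t i) t :=
    fun i t ht => hasDerivAt_pi.1 (hγL t ht) i
  have hγUd : ∀ i, ∀ t ∈ Ici (0:ℝ), HasDerivAt (fun s => γU s i) (γU' t i) t :=
    fun i t ht => hasDerivAt_pi.1 (hγU t ht) i
  -- continuity of the funnel boundary derivatives (via the explicit formulas)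
  have hcontL' : ∀ i, ContinuousOn (fun t => γL' t i) (Ici 0) := by
    intro i
    by_cases hi : i = istar
    · subst hi
      set a : ℝ → ℝ := fun t => rhoL η Xlow l ρinf t i with ha
      set ad : ℝ → ℝ :=
        fun t => -((η i - Xlow i) * ((1 - ρinf i) * (Real.exp (-l i * t) * -l i))) with had
      have heq : (fun s => γL s i)
          = fun s => (1/ν) * Real.log (Real.exp (ν * a s) + Real.exp (ν * β s)) :=
        funext fun s => by rw [hγLdef s i]; simp [ha]
      have hD : ∀ t ∈ Ici (0:ℝ), γL' t i =
          (1/ν) * ((Real.exp (ν * a t) * (ν * ad t) + Real.exp (ν * β t) * (ν * β' t))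
            / (Real.exp (ν * a t) + Real.exp (ν * β t))) := by
        intro t ht
        have h1 : HasDerivAt (fun s => ν * a s) (ν * ad t) t :=
          (hasDerivAt_rhoL η Xlow l ρinf i t).const_mul ν
        have h3 : HasDerivAt (fun s => ν * β s) (ν * β' t) t := (hβ t ht).const_mul ν
        have hpos : (0:ℝ) < Real.exp (ν * a t) + Real.exp (ν * β t) := by positivity
        have h5 := ((h1.exp.add h3.exp).log (ne_of_gt hpos)).const_mul (1/ν)
        have hF : HasDerivAt (fun s => γL s i)
            ((1/ν) * ((Real.exp (ν * a t) * (ν * ad t) + Real.exp (ν * β t) * (ν * β' t))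
              / (Real.exp (ν * a t) + Real.exp (ν * β t)))) t := by
          rw [heq]; exact h5
        exact (hγLd i t ht).unique hF
      refine ContinuousOn.congr ?_ hD
      have hapos : ∀ t : ℝ, (0:ℝ) < Real.exp (ν * a t) + Real.exp (ν * β t) :=
        fun t => by positivity
      have hac : Continuous a := continuous_rhoLcoord η Xlow l ρinf i
      have hadc : Continuous ad := by unfold ad; fun_prop
      have he1 : ContinuousOn (fun t => Real.exp (ν * a t)) (Ici 0) :=
        (Real.continuous_exp.comp (continuous_const.mul hac)).continuousOn
      have he2 : ContinuousOn (fun t => Real.exp (ν * β t)) (Ici 0) :=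
        Real.continuous_exp.comp_continuousOn (continuousOn_const.mul hβc)
      exact continuousOn_const.mul
        (((he1.mul (continuousOn_const.mul hadc.continuousOn)).add
          (he2.mul (continuousOn_const.mul hβ'c))).div (he1.add he2)
          (fun t ht => ne_of_gt (hapos t)))
    · have heq : ∀ s : ℝ, γL s i = rhoL η Xlow l ρinf s i := fun s => by
        rw [hγLdef s i]; simp [hi]
      have hD : ∀ t ∈ Ici (0:ℝ), γL' t i =
          -((η i - Xlow i) * ((1 - ρinf i) * (Real.exp (-l i * t) * -l i))) := by
        intro t ht
        have hF : HasDerivAt (fun s => γL s i)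
            (-((η i - Xlow i) * ((1 - ρinf i) * (Real.exp (-l i * t) * -l i)))) t := by
          have := hasDerivAt_rhoL η Xlow l ρinf i t
          simpa [funext heq] using this
        exact (hγLd i t ht).unique hF
      refine ContinuousOn.congr ?_ hD
      fun_prop
  have hcontU' : ∀ i, ContinuousOn (fun t => γU' t i) (Ici 0) := by
    intro i
    have hα'ci : ContinuousOn (fun t => α' t i) (Ici 0) := continuousOn_pi.1 hα'c i
    by_cases hi : i = istar
    · subst hi
      have heq : ∀ s : ℝ, γU s i = rhoU η Xhigh l ρinf s i + α s i := fun s => by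
        rw [hγUdef s i]; simp
      have hD : ∀ t ∈ Ici (0:ℝ), γU' t i =
          (Xhigh i - η i) * ((1 - ρinf i) * (Real.exp (-l i * t) * -l i)) + α' t i := by
        intro t ht
        have hαi : HasDerivAt (fun s => α s i) (α' t i) t := hasDerivAt_pi.1 (hα t ht) i
        have hF : HasDerivAt (fun s => γU s i)
            ((Xhigh i - η i) * ((1 - ρinf i) * (Real.exp (-l i * t) * -l i)) + α' t i) t := by
          have := (hasDerivAt_rhoU η Xhigh l ρinf i t).add hαi
          rw [funext heq]; exact this
        exact (hγUd i t ht).unique hF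
      refine ContinuousOn.congr ?_ hD
      exact (Continuous.continuousOn (by fun_prop)).add hα'ci
    · have heq : ∀ s : ℝ, γU s i = rhoU η Xhigh l ρinf s i := fun s => by
        rw [hγUdef s i]; simp [hi]
      have hD : ∀ t ∈ Ici (0:ℝ), γU' t i =
          (Xhigh i - η i) * ((1 - ρinf i) * (Real.exp (-l i * t) * -l i)) := by
        intro t ht
        have hF : HasDerivAt (fun s => γU s i)
            ((Xhigh i - η i) * ((1 - ρinf i) * (Real.exp (-l i * t) * -l i))) t := by
          have := hasDerivAt_rhoU η Xhigh l ρinf i t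
          simpa [funext heq] using this
        exact (hγUd i t ht).unique hF
      refine ContinuousOn.congr ?_ hD
      fun_prop
  -- main invariance claim
  have main : ∀ t ∈ Ici (0:ℝ), ∀ i, γL t i < x t i ∧ x t i < γU t i := by
    by_contra hcon
    push_neg at hcon
    obtain ⟨t₀, ht₀, i₀, hbad⟩ := hcon
    have hbad' : x t₀ i₀ ≤ γL t₀ i₀ ∨ γU t₀ i₀ ≤ x t₀ i₀ := by
      by_cases h : γL t₀ i₀ < x t₀ i₀
      · exact Or.inr (hbad h)
      · exact Or.inl (le_of_not_gt h)
    set B : Set ℝ := ⋃ i, ({t | t ∈ Icc (0:ℝ) t₀ ∧ x t i ≤ γL t i}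
        ∪ {t | t ∈ Icc (0:ℝ) t₀ ∧ γU t i ≤ x t i}) with hB
    have hsub : Icc (0:ℝ) t₀ ⊆ Ici 0 := fun s hs => hs.1
    have hBclosed : IsClosed B := by
      refine isClosed_iUnion_of_finite (fun i => IsClosed.union ?_ ?_)
      · have heq : {t | t ∈ Icc (0:ℝ) t₀ ∧ x t i ≤ γL t i}
            = Icc 0 t₀ ∩ (fun t => x t i - γL t i) ⁻¹' Iic 0 := by
          ext s; simp [sub_nonpos]
        rw [heq]
        exact (((hxci i).mono hsub).sub
          ((hγLci i).mono hsub)).preimage_isClosed_of_isClosed isClosed_Icc isClosed_Iic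
      · have heq : {t | t ∈ Icc (0:ℝ) t₀ ∧ γU t i ≤ x t i}
            = Icc 0 t₀ ∩ (fun t => γU t i - x t i) ⁻¹' Iic 0 := by
          ext s; simp [sub_nonpos]
        rw [heq]
        exact (((hγUci i).mono hsub).sub
          ((hxci i).mono hsub)).preimage_isClosed_of_isClosed isClosed_Icc isClosed_Iic
    have hBne : B.Nonempty := by
      refine ⟨t₀, mem_iUnion.2 ⟨i₀, ?_⟩⟩
      rcases hbad' with h | h
      · exact Or.inl ⟨⟨ht₀, le_rfl⟩, h⟩
      · exact Or.inr ⟨⟨ht₀, le_rfl⟩, h⟩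
    have hBmem : ∀ s ∈ B, s ∈ Icc (0:ℝ) t₀ ∧ ∃ i, x s i ≤ γL s i ∨ γU s i ≤ x s i := by
      intro s hs
      rw [hB] at hs
      simp only [mem_iUnion, mem_union, mem_setOf_eq] at hs
      obtain ⟨i, hi⟩ := hs
      rcases hi with ⟨h1, h2⟩ | ⟨h1, h2⟩
      · exact ⟨h1, i, Or.inl h2⟩
      · exact ⟨h1, i, Or.inr h2⟩
    have hBbdd : BddBelow B := ⟨0, fun s hs => (hBmem s hs).1.1⟩
    set τ := sInf B with hτdef
    have hτB : τ ∈ B := hBclosed.csInf_mem hBne hBbdd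
    obtain ⟨hτIcc, iB, hiB⟩ := hBmem τ hτB
    have hτ0 : 0 ≤ τ := hτIcc.1
    have hτpos : 0 < τ := by
      rcases lt_or_eq_of_le hτ0 with h | h
      · exact h
      · exfalso
        rw [← h] at hiB
        rcases hiB with h' | h'
        · linarith [(hx0 iB).1]
        · linarith [(hx0 iB).2]
    have hgood : ∀ s, 0 ≤ s → s < τ → ∀ i, γL s i < x s i ∧ x s i < γU s i := by
      intro s hs hsτ i
      by_contra h
      rw [not_and_or] at h
      have hsB : s ∈ B := by
        rw [hB]
        refine mem_iUnion.2 ⟨i, ?_⟩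
        rcases h with h | h
        · exact Or.inl ⟨⟨hs, le_trans hsτ.le hτIcc.2⟩, le_of_not_gt h⟩
        · exact Or.inr ⟨⟨hs, le_trans hsτ.le hτIcc.2⟩, le_of_not_gt h⟩
      exact absurd (csInf_le hBbdd hsB) (not_le.2 hsτ)
    -- constants on [0, τ]
    have hJsub : Icc (0:ℝ) τ ⊆ Ici 0 := fun s hs => hs.1
    have hΦc : ContinuousOn (fun t => (fun i => f (x t) i - (γU' t i + γL' t i)/2))
        (Icc 0 τ) := by
      rw [continuousOn_pi]
      intro i
      have hfx : ContinuousOn (fun t => f (x t) i) (Icc 0 τ) :=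
        (continuous_apply i).comp_continuousOn (hf.continuous.comp_continuousOn (hxc.mono hJsub))
      exact hfx.sub ((((hcontU' i).mono hJsub).add ((hcontL' i).mono hJsub)).div_const 2)
    obtain ⟨M0, hM0⟩ := isCompact_Icc.exists_bound_of_continuousOn hΦc
    set M := max M0 0 with hM
    have hMnn : 0 ≤ M := le_max_right _ _
    have hMb : ∀ t ∈ Icc (0:ℝ) τ, ∀ i, |f (x t) i - (γU' t i + γL' t i)/2| ≤ M := by
      intro t ht i
      have h2 := norm_le_pi_norm (fun j => f (x t) j - (γU' t j + γL' t j)/2) i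
      rw [Real.norm_eq_abs] at h2
      exact le_trans h2 (le_trans (hM0 t ht) (le_max_left _ _))
    have hdcont : ContinuousOn (fun t => γU t - γL t) (Icc 0 τ) :=
      (hγUc.mono hJsub).sub (hγLc.mono hJsub)
    obtain ⟨Γ0, hΓ0⟩ := isCompact_Icc.exists_bound_of_continuousOn hdcont
    set Γ := max Γ0 δ with hΓdef
    have hΓpos : 0 < Γ := lt_of_lt_of_le hδ (le_max_right _ _)
    have hΓb : ∀ t ∈ Icc (0:ℝ) τ, ∀ i, γU t i - γL t i ≤ Γ := by
      intro t ht i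
      have h1 : γU t i - γL t i ≤ |γU t i - γL t i| := le_abs_self _
      have h2 : |γU t i - γL t i| = ‖(γU t - γL t) i‖ := by
        simp [Real.norm_eq_abs]
      calc γU t i - γL t i ≤ ‖(γU t - γL t) i‖ := by rw [← h2]; exact h1
      _ ≤ ‖γU t - γL t‖ := norm_le_pi_norm _ i
      _ ≤ Γ0 := hΓ0 t ht
      _ ≤ Γ := le_max_left _ _
    set c : ℝ := ‖(fun i => terr (γL 0 i) (γU 0 i) (x 0 i))‖ + M * Γ / (4*k) + 1 with hcdef
    have hMΓ : 0 ≤ M * Γ / (4*k) := by positivity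
    have hc0 : ∀ i, |terr (γL 0 i) (γU 0 i) (x 0 i)| < c := by
      intro i
      have h1 := norm_le_pi_norm (fun i => terr (γL 0 i) (γU 0 i) (x 0 i)) i
      rw [Real.norm_eq_abs] at h1
      rw [hcdef]
      linarith
    have hcpos : 0 < c := lt_of_le_of_lt (abs_nonneg _) (hc0 istar)
    have hckey : M < k * (4/Γ) * c := by
      have h1 : k * (4/Γ) * (M*Γ/(4*k)) = M := by field_simp
      have hq : 0 < k * (4/Γ) := by positivity
      have hcge : M*Γ/(4*k) + 1 ≤ c := by
        rw [hcdef]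
        linarith [norm_nonneg (fun i => terr (γL 0 i) (γU 0 i) (x 0 i))]
      nlinarith
    -- derivative of the transformed error along the solution
    have hEs : ∀ i, ∀ t, 0 ≤ t → t < τ → ∀ s ∈ Icc (0:ℝ) t,
        HasDerivAt (fun u => terr (γL u i) (γU u i) (x u i))
          (xhat (γL s i) (γU s i) (x s i) * (f (x s) i - (γU' s i + γL' s i)/2)
            - k * (xhat (γL s i) (γU s i) (x s i))^2 * terr (γL s i) (γU s i) (x s i)) s := by
      intro i t ht htτ s hs
      have hsτ : s < τ := lt_of_le_of_lt hs.2 htτ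
      have hsIci : s ∈ Ici (0:ℝ) := hs.1
      have hP : ∀ u ∈ Icc (0:ℝ) s, ∀ j, γL u j < x u j ∧ x u j < γU u j :=
        fun u hu j => hgood u hu.1 (lt_of_le_of_lt hu.2 hsτ) j
      have hx' := hode s hsIci hP
      have hxi := hasDerivAt_pi.1 hx' i
      have hPs := hgood s hs.1 hsτ i
      have hval : (f (x s) + (g (x s)).mulVec (funnelController k g γL γU γL' γU' (x s) s)) i
          = f (x s) i - (k * xhat (γL s i) (γU s i) (x s i) * terr (γL s i) (γU s i) (x s i)
            - (1/2) * (γU' s i - γL' s i) * nerr (γL s i) (γU s i) (x s i)) := by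
        rw [Pi.add_apply, control_identity k g γL γU γL' γU' (x s) s (hpd (x s))]
        ring
      rw [hval] at hxi
      have hc := hasDerivAt_terr_comp (hγLd i s hsIci) (hγUd i s hsIci) hxi hPs.1 hPs.2
      convert hc using 1
      ring
    -- uniform bound on the transformed error inside the funnel
    have hbound : ∀ i, ∀ t, 0 ≤ t → t < τ → |terr (γL t i) (γU t i) (x t i)| < c := by
      intro i t ht htτ
      have hup : ∀ s ∈ Icc (0:ℝ) t, terr (γL s i) (γU s i) (x s i) < c := by
        refine barrier_lemma ht (fun s hs => hEs i t ht htτ s hs)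
          ((abs_lt.1 (hc0 i)).2) ?_
        intro s hsIoc hcs
        have hsτ : s < τ := lt_of_le_of_lt hsIoc.2 htτ
        have hPs := hgood s hsIoc.1.le hsτ i
        have hΓs := hΓb s ⟨hsIoc.1.le, hsτ.le⟩ i
        have hMs := hMb s ⟨hsIoc.1.le, hsτ.le⟩ i
        have hξpos : 0 < xhat (γL s i) (γU s i) (x s i) := xhat_pos hPs.1 hPs.2
        have hξlow : 4/Γ ≤ xhat (γL s i) (γU s i) (x s i) := xhat_lower hPs.1 hPs.2 hΓs
        set ξ := xhat (γL s i) (γU s i) (x s i)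
        set ε := terr (γL s i) (γU s i) (x s i)
        set Φ := f (x s) i - (γU' s i + γL' s i)/2
        have h1 : ξ * Φ ≤ ξ * M := mul_le_mul_of_nonneg_left (le_of_abs_le hMs) hξpos.le
        have s1 : k*(4/Γ)*c ≤ k*ξ*c :=
          mul_le_mul_of_nonneg_right (mul_le_mul_of_nonneg_left hξlow hk.le) hcpos.le
        have s2 : k*ξ*c ≤ k*ξ*ε :=
          mul_le_mul_of_nonneg_left hcs (mul_nonneg hk.le hξpos.le)
        have s3 : M < k*ξ*ε := lt_of_lt_of_le hckey (s1.trans s2)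
        have s4 : ξ*M < ξ*(k*ξ*ε) := mul_lt_mul_of_pos_left s3 hξpos
        nlinarith [h1, s4]
      have hlo : ∀ s ∈ Icc (0:ℝ) t, -terr (γL s i) (γU s i) (x s i) < c := by
        refine barrier_lemma (G := fun s => -terr (γL s i) (γU s i) (x s i))
          (G' := fun s => -(xhat (γL s i) (γU s i) (x s i) * (f (x s) i - (γU' s i + γL' s i)/2)
            - k * (xhat (γL s i) (γU s i) (x s i))^2 * terr (γL s i) (γU s i) (x s i)))
          ht (fun s hs => (hEs i t ht htτ s hs).neg) ?_ ?_
        · show -terr (γL 0 i) (γU 0 i) (x 0 i) < c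
          have := (abs_lt.1 (hc0 i)).1; linarith
        · intro s hsIoc hcs
          replace hcs : c ≤ -terr (γL s i) (γU s i) (x s i) := hcs
          show -(xhat (γL s i) (γU s i) (x s i) * (f (x s) i - (γU' s i + γL' s i)/2)
            - k * (xhat (γL s i) (γU s i) (x s i))^2 * terr (γL s i) (γU s i) (x s i)) < 0
          have hsτ : s < τ := lt_of_le_of_lt hsIoc.2 htτ
          have hPs := hgood s hsIoc.1.le hsτ i
          have hΓs := hΓb s ⟨hsIoc.1.le, hsτ.le⟩ i
          have hMs := hMb s ⟨hsIoc.1.le, hsτ.le⟩ i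
          have hξpos : 0 < xhat (γL s i) (γU s i) (x s i) := xhat_pos hPs.1 hPs.2
          have hξlow : 4/Γ ≤ xhat (γL s i) (γU s i) (x s i) := xhat_lower hPs.1 hPs.2 hΓs
          set ξ := xhat (γL s i) (γU s i) (x s i)
          set ε := terr (γL s i) (γU s i) (x s i)
          set Φ := f (x s) i - (γU' s i + γL' s i)/2
          have hεc : ε ≤ -c := by linarith
          have hMs2 : -Φ ≤ M := by
            have := (abs_le.1 hMs).1
            linarith
          have h1 : ξ * (-Φ) ≤ ξ * M := mul_le_mul_of_nonneg_left hMs2 hξpos.le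
          have s1 : k*(4/Γ)*c ≤ k*ξ*c :=
            mul_le_mul_of_nonneg_right (mul_le_mul_of_nonneg_left hξlow hk.le) hcpos.le
          have s3 : M < k*ξ*c := lt_of_lt_of_le hckey s1
          have s4 : ξ*M < ξ*(k*ξ*c) := mul_lt_mul_of_pos_left s3 hξpos
          have s5 : k*ξ^2*ε ≤ k*ξ^2*(-c) :=
            mul_le_mul_of_nonneg_left hεc (by positivity)
          nlinarith [h1, s4, s5]
      have h1 := hup t ⟨ht, le_rfl⟩
      have h2 := hlo t ⟨ht, le_rfl⟩
      rw [abs_lt]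
      exact ⟨by linarith, h1⟩
    -- from the transformed-error bound to a normalized-error bound
    set r := (Real.exp c - 1)/(Real.exp c + 1) with hrdef
    have hEpos : 0 < Real.exp c := Real.exp_pos c
    have hE1 : 1 < Real.exp c := by
      have := Real.add_one_lt_exp (ne_of_gt hcpos)
      linarith
    have hr1 : r < 1 := by
      rw [hrdef, div_lt_one (by positivity)]
      linarith
    have hrb : ∀ i, ∀ t, 0 ≤ t → t < τ →
        |2 * x t i - (γU t i + γL t i)| ≤ r * (γU t i - γL t i) := by
      intro i t ht htτ
      have hPs := hgood t ht htτ i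
      have hd0 : 0 < γU t i - γL t i := by linarith [hPs.1, hPs.2]
      have hap := one_add_nerr_pos hPs.1 hPs.2
      have hsp := one_sub_nerr_pos hPs.1 hPs.2
      set e := nerr (γL t i) (γU t i) (x t i) with he
      have habs := abs_lt.1 (hbound i t ht htτ)
      have hterr : terr (γL t i) (γU t i) (x t i) = Real.log ((1+e)/(1-e)) := by
        rw [terr, he]
      rw [hterr] at habs
      have hqpos : 0 < (1+e)/(1-e) := div_pos hap hsp
      have hq1 : (1+e)/(1-e) < Real.exp c := by
        have hlog : Real.log ((1+e)/(1-e)) < c := habs.2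
        calc (1+e)/(1-e) = Real.exp (Real.log ((1+e)/(1-e))) := (Real.exp_log hqpos).symm
        _ < Real.exp c := Real.exp_lt_exp.2 hlog
      have hq2 : (Real.exp c)⁻¹ < (1+e)/(1-e) := by
        have hlog : -c < Real.log ((1+e)/(1-e)) := by linarith [habs.1]
        calc (Real.exp c)⁻¹ = Real.exp (-c) := (Real.exp_neg c).symm
        _ < Real.exp (Real.log ((1+e)/(1-e))) := Real.exp_lt_exp.2 hlog
        _ = (1+e)/(1-e) := Real.exp_log hqpos
      set E := Real.exp c with hEdef
      have h1 : 1 + e < E * (1 - e) := by rwa [div_lt_iff₀ hsp] at hq1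
      have h2 : E⁻¹ * (1 - e) < 1 + e := (lt_div_iff₀ hsp).1 hq2
      have h2' : 1 - e < E * (1 + e) := by
        have h3 := mul_lt_mul_of_pos_left h2 hEpos
        rwa [← mul_assoc, mul_inv_cancel₀ (ne_of_gt hEpos), one_mul] at h3
      have herU : e < r := by
        rw [hrdef, lt_div_iff₀ (by positivity)]
        nlinarith
      have herL : -r < e := by
        rw [hrdef, neg_lt]
        rw [lt_div_iff₀ (by positivity)]
        nlinarith
      have hee : 2 * x t i - (γU t i + γL t i) = e * (γU t i - γL t i) := by
        rw [he]
        unfold nerr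
        field_simp
      rw [hee, abs_mul, abs_of_pos hd0]
      apply mul_le_mul_of_nonneg_right _ hd0.le
      rw [abs_le]
      exact ⟨by linarith, by linarith⟩
    -- pass to the limit t → τ and contradict
    set K := Icc (0:ℝ) τ ∩
      (fun t => |2 * x t iB - (γU t iB + γL t iB)| - r * (γU t iB - γL t iB)) ⁻¹' Iic 0
      with hKdef
    have hKc : IsClosed K := by
      have hcont : ContinuousOn
          (fun t => |2 * x t iB - (γU t iB + γL t iB)| - r * (γU t iB - γL t iB))
          (Icc 0 τ) := by
        apply ContinuousOn.sub
        · exact ((continuousOn_const.mul ((hxci iB).mono hJsub)).sub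
            (((hγUci iB).mono hJsub).add ((hγLci iB).mono hJsub))).abs
        · exact continuousOn_const.mul (((hγUci iB).mono hJsub).sub ((hγLci iB).mono hJsub))
      exact hcont.preimage_isClosed_of_isClosed isClosed_Icc isClosed_Iic
    have hsubK : Ico (0:ℝ) τ ⊆ K := by
      intro s hs
      refine ⟨⟨hs.1, hs.2.le⟩, ?_⟩
      have := hrb iB s hs.1 hs.2
      simp only [mem_preimage, mem_Iic]
      linarith
    have hτK : τ ∈ K := by
      have h1 : τ ∈ closure (Ico (0:ℝ) τ) := by
        rw [closure_Ico (ne_of_gt hτpos).symm]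
        exact ⟨hτ0, le_rfl⟩
      exact hKc.closure_subset ((closure_mono hsubK) h1)
    have hfin : |2 * x τ iB - (γU τ iB + γL τ iB)| ≤ r * (γU τ iB - γL τ iB) := by
      have := hτK.2
      simp only [mem_preimage, mem_Iic] at this
      linarith
    have hgτ := hgapδ τ hτ0 iB
    rcases hiB with h | h
    · have hle : γU τ iB - γL τ iB ≤ -(2 * x τ iB - (γU τ iB + γL τ iB)) := by linarith
      have h2 := neg_le_abs (2 * x τ iB - (γU τ iB + γL τ iB))
      nlinarith
    · have hle : γU τ iB - γL τ iB ≤ 2 * x τ iB - (γU τ iB + γL τ iB) := by linarith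
      have h2 := le_abs_self (2 * x τ iB - (γU τ iB + γL τ iB))
      nlinarith
  refine ⟨main, fun t ht => ?_⟩
  have h1 := (main t ht istar).1
  have h2 : β t < γL t istar := by
    rw [hγLdef t istar]
    simp only [if_pos rfl]
    have hlt : Real.exp (ν * β t) < Real.exp (ν * rhoL η Xlow l ρinf t istar)
        + Real.exp (ν * β t) := lt_add_of_pos_left _ (Real.exp_pos _)
    have := Real.log_lt_log (Real.exp_pos _) hlt
    rw [Real.log_exp] at this
    calc β t = (1/ν) * (ν * β t) := by field_simp
    _ < (1/ν) * Real.log (Real.exp (ν * rhoL η Xlow l ρinf t istar) + Real.exp (ν * β t)) := by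
        apply mul_lt_mul_of_pos_left this (by positivity)
  linarith
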